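/- Let f(y) = (1/2)y². For every initial data x₀, y₀, z₀, x₁, y₁, z₁ ∈ ℝ there exist twice continuously differentiable functions x, y, x̃ : ℝ → ℝ defined on all of ℝ with x(0)=x₀, x'(0)=x₁, y(0)=y₀, y'(0)=y₁, x̃(0)=z₀, x̃'(0)=z₁, satisfying the geodesic system x'' = 0, y'' = −f'(y)·(x')² = −(x')²·y, x̃'' = 2·f'(y)·x'·y' = 2y·x'·y' on all of ℝ. (Hence the manifold S₊ = M_{f} with f(y)=(1/2)y² is geodesically complete.) -/

import Mathlib

/-- Adding an antiderivative: if `g` is `C¹`, then `t ↦ z₀ + ∫ s in 0..t, g s`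
is `C²` with derivative `g`. -/
lemma aux_antideriv (g : ℝ → ℝ) (hg : ContDiff ℝ 1 g) (z₀ : ℝ) :
    ContDiff ℝ 2 (fun t => z₀ + ∫ s in (0:ℝ)..t, g s) ∧
    (∀ t, deriv (fun t => z₀ + ∫ s in (0:ℝ)..t, g s) t = g t) := by
  have hc : Continuous g := hg.continuous
  have hd : ∀ t : ℝ, HasDerivAt (fun u => z₀ + ∫ s in (0:ℝ)..u, g s) (g t) t := by
    intro t
    exact (intervalIntegral.integral_hasDerivAt_right (hc.intervalIntegrable 0 t)
      (hc.stronglyMeasurableAtFilter _ _) hc.continuousAt).const_add z₀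
  have hderiv : ∀ t, deriv (fun t => z₀ + ∫ s in (0:ℝ)..t, g s) t = g t :=
    fun t => (hd t).deriv
  refine ⟨?_, hderiv⟩
  have : ContDiff ℝ ((1:ℕ) + 1) (fun t => z₀ + ∫ s in (0:ℝ)..t, g s) := by
    refine contDiff_succ_iff_deriv.mpr ⟨fun t => (hd t).differentiableAt, by simp, ?_⟩
    have : deriv (fun t => z₀ + ∫ s in (0:ℝ)..t, g s) = g := funext hderiv
    rw [this]; exact_mod_cast hg
  exact_mod_cast this

/-- Geodesic completeness of `S₊ = M_f` for `f(y) = (1/2) y²`: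
every solution of the geodesic system `x'' = 0`, `y'' = -(x')² y`,
`x̃'' = 2 y x' y'` with prescribed initial data exists on all of `ℝ`. -/
theorem Splus_geodesically_complete (x₀ y₀ z₀ x₁ y₁ z₁ : ℝ) :
    ∃ x y xt : ℝ → ℝ,
      ContDiff ℝ 2 x ∧ ContDiff ℝ 2 y ∧ ContDiff ℝ 2 xt ∧
      x 0 = x₀ ∧ deriv x 0 = x₁ ∧
      y 0 = y₀ ∧ deriv y 0 = y₁ ∧
      xt 0 = z₀ ∧ deriv xt 0 = z₁ ∧
      (∀ t : ℝ, deriv (deriv x) t = 0) ∧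
      (∀ t : ℝ, deriv (deriv y) t = -(deriv x t) ^ 2 * y t) ∧
      (∀ t : ℝ, deriv (deriv xt) t = 2 * y t * deriv x t * deriv y t) := by
  have hlin : ∀ a b : ℝ, ∀ t : ℝ, HasDerivAt (fun t : ℝ => a + b * t) b t := by
    intro a b t
    simpa using ((hasDerivAt_id t).const_mul b).const_add a
  have hlinC : ∀ a b : ℝ, ContDiff ℝ 2 (fun t : ℝ => a + b * t) :=
    fun a b => contDiff_const.add (contDiff_const.mul contDiff_id)
  have hlinD : ∀ a b : ℝ, deriv (fun t : ℝ => a + b * t) = fun _ => b :=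
    fun a b => funext fun t => (hlin a b t).deriv
  -- x is the same in both cases
  set x : ℝ → ℝ := fun t => x₀ + x₁ * t with hxdef
  have hx' : deriv x = fun _ => x₁ := hlinD x₀ x₁
  have hx'' : ∀ t : ℝ, deriv (deriv x) t = 0 := by
    intro t; rw [hx']; simp
  by_cases hω : x₁ = 0
  · -- degenerate case: everything linear
    refine ⟨x, fun t => y₀ + y₁ * t, fun t => z₀ + z₁ * t,
      hlinC _ _, hlinC _ _, hlinC _ _, by simp [hxdef], by rw [hx'], by simp, ?_, by simp, ?_,
      hx'', ?_, ?_⟩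
    · rw [hlinD]
    · rw [hlinD]
    · intro t
      rw [hlinD, hx']
      simp [hω]
    · intro t
      rw [hlinD, hx']
      simp [hω]
  · -- oscillatory case
    set y : ℝ → ℝ := fun t => y₀ * Real.cos (x₁ * t) + (y₁ / x₁) * Real.sin (x₁ * t)
      with hydef
    set y' : ℝ → ℝ := fun t => -(y₀ * x₁) * Real.sin (x₁ * t) + y₁ * Real.cos (x₁ * t)
      with hy'def
    have harg : ∀ t : ℝ, HasDerivAt (fun t : ℝ => x₁ * t) x₁ t := by
      intro t; simpa using (hasDerivAt_id t).const_mul x₁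
    have hy' : ∀ t : ℝ, HasDerivAt y (y' t) t := by
      intro t
      have h := ((harg t).cos.const_mul y₀).add ((harg t).sin.const_mul (y₁ / x₁))
      convert h using 1
      rfl
      rfl
      rfl
      simp only [hy'def]
      field_simp
    have hy'' : ∀ t : ℝ, HasDerivAt y' (-(x₁ ^ 2) * y t) t := by
      intro t
      have h := ((harg t).sin.const_mul (-(y₀ * x₁))).add ((harg t).cos.const_mul y₁)
      convert h using 1
      rfl
      rfl
      rfl
      simp only [hydef]
      field_simp
      ring
    have hdy : deriv y = y' := funext fun t => (hy' t).deriv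
    have hyC : ContDiff ℝ 2 y := by
      apply ContDiff.add
      · exact contDiff_const.mul (Real.contDiff_cos.comp (contDiff_const.mul contDiff_id))
      · exact contDiff_const.mul (Real.contDiff_sin.comp (contDiff_const.mul contDiff_id))
    -- the third equation
    set g : ℝ → ℝ := fun t => z₁ + x₁ * ((y t) ^ 2 - y₀ ^ 2) with hgdef
    have hgC : ContDiff ℝ 1 g := by
      have hy1 : ContDiff ℝ 1 y := hyC.of_le (by norm_num)
      exact contDiff_const.add (contDiff_const.mul ((hy1.pow 2).sub contDiff_const))
    obtain ⟨hxtC, hxt'⟩ := aux_antideriv g hgC z₀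
    set xt : ℝ → ℝ := fun t => z₀ + ∫ s in (0:ℝ)..t, g s with hxtdef
    have hg' : ∀ t : ℝ, HasDerivAt g (x₁ * (2 * y t ^ 1 * y' t)) t := by
      intro t
      exact ((((hy' t).pow 2).sub_const (y₀ ^ 2)).const_mul x₁).const_add z₁
    have hy0 : y 0 = y₀ := by simp [hydef]
    refine ⟨x, y, xt, hlinC _ _, hyC, hxtC, by simp [hxdef], by rw [hx'],
      hy0, by rw [hdy]; simp [hy'def], ?_, ?_, hx'', ?_, ?_⟩
    · simp [hxtdef, intervalIntegral.integral_same]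
    · rw [hxt' 0, hgdef]
      simp [hy0]
    · intro t
      rw [hdy, hx', (hy'' t).deriv]
    · intro t
      have hdxt : deriv xt = g := funext hxt'
      rw [hdxt, (hg' t).deriv, hx', hdy]
      ring
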